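/- Let A = ℂ[μ, τ][z, z⁻¹]. The set of f ∈ A such that f(μ, τ, (μ+τ)(μ−τ)⁻¹ · z) again lies in A (is regular) equals the ℂ-subalgebra generated by μ, τ, x = (μ−τ)z and y = (μ+τ)z⁻¹. This subalgebra is isomorphic to ℂ[μ,τ,x,y]/(xy − (μ²−τ²)), the coordinate ring of the quadric cone xy = μ² − τ². -/

import Mathlib

/-!
STATEMENT 1.  `A = ℂ[μ,τ][z,z⁻¹]` is modelled as `LaurentPolynomial (MvPolynomial (Fin 2) ℂ)`
with `μ = X 0`, `τ = X 1`.  The substitution `z ↦ (μ+τ)(μ−τ)⁻¹ z` lands in Laurent polynomials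
over the fraction field `K` of `ℂ[μ,τ]`; "regular" means lying in the image of the canonical
embedding of `A`.
-/

open LaurentPolynomial MvPolynomial

noncomputable section

abbrev Cmt : Type := MvPolynomial (Fin 2) ℂ

abbrev Kf : Type := FractionRing Cmt

/-- `A = ℂ[μ,τ][z,z⁻¹]`. -/
abbrev Aring : Type := LaurentPolynomial Cmt

/-- `ℂ(μ,τ)-coefficient Laurent polynomials, where the substitution takes values. -/
abbrev SK : Type := LaurentPolynomial Kf

lemma sum_ne : (X 0 + X 1 : Cmt) ≠ 0 := by
  intro h
  have := congrArg (MvPolynomial.eval fun _ : Fin 2 => (1 : ℂ)) h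
  simp at this

lemma diff_ne : (X 0 - X 1 : Cmt) ≠ 0 := by
  intro h
  have := congrArg (MvPolynomial.eval fun i : Fin 2 => if i = 0 then (1 : ℂ) else 0) h
  simp at this

/-- the unit `(μ+τ)/(μ−τ)` of `K` -/
def ratU : Kfˣ :=
  (isUnit_iff_ne_zero.mpr (show algebraMap Cmt Kf (X 0 + X 1) ≠ 0 from
      fun h => sum_ne (IsFractionRing.injective Cmt Kf
        (h.trans (map_zero (algebraMap Cmt Kf)).symm)))).unit *
  (isUnit_iff_ne_zero.mpr (show algebraMap Cmt Kf (X 0 - X 1) ≠ 0 from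
      fun h => diff_ne (IsFractionRing.injective Cmt Kf
        (h.trans (map_zero (algebraMap Cmt Kf)).symm)))).unit⁻¹

/-- the unit `z` of `SK` -/
def zK : SKˣ := (isUnit_T (R := Kf) 1).unit

/-- the canonical embedding `ι : ℂ[μ,τ][z,z⁻¹] → K[z,z⁻¹]`, `z ↦ z`. -/
def iota : Aring →ₐ[Cmt] SK :=
  AddMonoidAlgebra.lift Cmt SK ℤ ((Units.coeHom SK).comp (zpowersHom SKˣ zK))

/-- the substitution `f(μ,τ,z) ↦ f(μ,τ,(μ+τ)(μ−τ)⁻¹·z)`. -/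
def subst : Aring →ₐ[Cmt] SK :=
  AddMonoidAlgebra.lift Cmt SK ℤ
    ((Units.coeHom SK).comp (zpowersHom SKˣ
      ((Units.map (LaurentPolynomial.C (R := Kf)).toMonoidHom ratU) * zK)))

/-- `μ`, `τ`, `x = (μ−τ)z`, `y = (μ+τ)z⁻¹` inside `A`. -/
def muA : Aring := LaurentPolynomial.C (X 0)
def tauA : Aring := LaurentPolynomial.C (X 1)
def xA : Aring := LaurentPolynomial.C (X 0 - X 1) * T 1
def yA : Aring := LaurentPolynomial.C (X 0 + X 1) * T (-1)

/-- the quadric cone `ℂ[μ,τ,x,y]/(xy − (μ²−τ²))`; variables `0,1,2,3 ↦ μ,τ,x,y`. -/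
abbrev Quadric : Type :=
  MvPolynomial (Fin 4) ℂ ⧸
    Ideal.span ({X 2 * X 3 - (X 0 ^ 2 - X 1 ^ 2)} : Set (MvPolynomial (Fin 4) ℂ))

namespace Stmt1

def Dp : Cmt := X 0 - X 1
def Sp : Cmt := X 0 + X 1

lemma algD_ne : algebraMap Cmt Kf Dp ≠ 0 :=
  fun h => diff_ne (IsFractionRing.injective Cmt Kf (h.trans (map_zero _).symm))
lemma algS_ne : algebraMap Cmt Kf Sp ≠ 0 :=
  fun h => sum_ne (IsFractionRing.injective Cmt Kf (h.trans (map_zero _).symm))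

lemma ratU_val : (ratU : Kf) = algebraMap Cmt Kf Sp * (algebraMap Cmt Kf Dp)⁻¹ := by
  rw [ratU, Units.val_mul, Units.val_inv_eq_inv_val, IsUnit.unit_spec, IsUnit.unit_spec]; rfl

lemma ratU_ne : (ratU : Kf) ≠ 0 := Units.ne_zero ratU

lemma D_mul_ratU : algebraMap Cmt Kf Dp * (ratU : Kf) = algebraMap Cmt Kf Sp := by
  rw [ratU_val, mul_comm, mul_assoc, inv_mul_cancel₀ algD_ne, mul_one]

lemma S_eq : algebraMap Cmt Kf Sp = algebraMap Cmt Kf Dp * (ratU : Kf) := D_mul_ratU.symm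

lemma D_eq : algebraMap Cmt Kf Dp = algebraMap Cmt Kf Sp * (ratU : Kf)⁻¹ := by
  rw [S_eq, mul_assoc, mul_inv_cancel₀ ratU_ne, mul_one]

lemma zK_val : ((zK : SKˣ) : SK) = T 1 := rfl

lemma zK_inv_val : ((zK⁻¹ : SKˣ) : SK) = T (-1) := by
  have h : ((zK⁻¹ : SKˣ) : SK) * (T 1 * T (-1)) = T (-1) := by
    rw [← zK_val, ← mul_assoc, ← Units.val_mul, inv_mul_cancel, Units.val_one, one_mul]
  rw [← T_add] at h
  norm_num at h
  exact h

lemma zK_zpow (n : ℤ) : ((zK ^ n : SKˣ) : SK) = T n := by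
  induction n using Int.induction_on with
  | zero => simp
  | succ k ih => rw [zpow_add_one, Units.val_mul, ih, zK_val, ← T_add]
  | pred k ih => rw [zpow_sub_one, Units.val_mul, ih, zK_inv_val, ← T_sub]

end Stmt1

namespace Stmt1
lemma addK (g h : SK) (m : ℤ) : (g + h : SK).coeff m = g.coeff m + h.coeff m := Finsupp.add_apply g.coeff h.coeff m
lemma addA (g h : Aring) (m : ℤ) : (g + h : Aring).coeff m = g.coeff m + h.coeff m := Finsupp.add_apply g.coeff h.coeff m
lemma singleK (n : ℤ) (a : Kf) (m : ℤ) :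
    (AddMonoidAlgebra.single n a : SK).coeff m = if n = m then a else 0 := Finsupp.single_apply
lemma singleA (n : ℤ) (a : Cmt) (m : ℤ) :
    (AddMonoidAlgebra.single n a : Aring).coeff m = if n = m then a else 0 := Finsupp.single_apply
end Stmt1

namespace Stmt1
set_option synthInstance.maxHeartbeats 800000
set_option maxHeartbeats 1600000

lemma CT_mul_CT (a b : Kf) (m n : ℤ) :
    (LaurentPolynomial.C a * T m) * (LaurentPolynomial.C b * T n)
      = LaurentPolynomial.C (a * b) * T (m + n) := by
  rw [← single_eq_C_mul_T, ← single_eq_C_mul_T, ← single_eq_C_mul_T]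
  exact AddMonoidAlgebra.single_mul_single _ _ _ _

/-- The unit used in `subst`. -/
def VU : SKˣ := (Units.map (LaurentPolynomial.C (R := Kf)).toMonoidHom ratU) * zK

lemma VU_val : ((VU : SKˣ) : SK) = LaurentPolynomial.C (ratU : Kf) * T 1 := rfl

lemma VU_inv_val : ((VU⁻¹ : SKˣ) : SK) = LaurentPolynomial.C ((ratU : Kf)⁻¹) * T (-1) := by
  have key : ((VU : SKˣ) : SK) * (LaurentPolynomial.C ((ratU : Kf)⁻¹) * T (-1)) = 1 := by
    rw [VU_val, CT_mul_CT, mul_inv_cancel₀ ratU_ne]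
    norm_num
  have h : ((VU⁻¹ : SKˣ) : SK) * (((VU : SKˣ) : SK) * (LaurentPolynomial.C ((ratU : Kf)⁻¹) * T (-1)))
      = LaurentPolynomial.C ((ratU : Kf)⁻¹) * T (-1) := by
    rw [← mul_assoc, ← Units.val_mul, inv_mul_cancel, Units.val_one, one_mul]
  rw [key, mul_one] at h
  exact h

lemma VU_zpow (n : ℤ) : ((VU ^ n : SKˣ) : SK)
    = LaurentPolynomial.C ((ratU : Kf) ^ n) * T n := by
  induction n using Int.induction_on with
  | zero => norm_num
  | succ k ih =>
      rw [zpow_add_one, Units.val_mul, ih, VU_val, CT_mul_CT, ← zpow_add_one₀ ratU_ne]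
  | pred k ih =>
      rw [zpow_sub_one, Units.val_mul, ih, VU_inv_val, CT_mul_CT, ← zpow_sub_one₀ ratU_ne,
        sub_eq_add_neg]

lemma iota_single (n : ℤ) (a : Cmt) :
    iota (AddMonoidAlgebra.single n a) = AddMonoidAlgebra.single n (algebraMap Cmt Kf a) := by
  have h : iota (AddMonoidAlgebra.single n a) = a • ((zK ^ n : SKˣ) : SK) := by
    rw [iota, AddMonoidAlgebra.lift_single]; rfl
  rw [h, zK_zpow, Algebra.smul_def]
  show LaurentPolynomial.C (algebraMap Cmt Kf a) * T n = _
  rw [← single_eq_C_mul_T]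

lemma subst_single (n : ℤ) (a : Cmt) :
    subst (AddMonoidAlgebra.single n a) =
      AddMonoidAlgebra.single n (algebraMap Cmt Kf a * (ratU : Kf) ^ n) := by
  have h : subst (AddMonoidAlgebra.single n a) = a • ((VU ^ n : SKˣ) : SK) := by
    rw [subst, AddMonoidAlgebra.lift_single]; rfl
  rw [h, VU_zpow, Algebra.smul_def]
  show LaurentPolynomial.C (algebraMap Cmt Kf a) * (LaurentPolynomial.C ((ratU:Kf)^n) * T n) = _
  rw [← mul_assoc, ← map_mul, ← single_eq_C_mul_T]

lemma iota_apply (f : Aring) (m : ℤ) :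
    (iota f).coeff m = algebraMap Cmt Kf (f.coeff m) := by
  induction f using AddMonoidAlgebra.induction with
  | zero => simp
  | single_add n a f hn ha ih =>
      have h2 : iota (AddMonoidAlgebra.single n a + f)
          = iota (AddMonoidAlgebra.single n a) + iota f := map_add _ _ _
      rw [h2, iota_single, addK, addA, ih, RingHom.map_add, singleK, singleA]
      congr 1
      simp [apply_ite (algebraMap Cmt Kf)]

lemma subst_apply (f : Aring) (m : ℤ) :
    (subst f).coeff m = algebraMap Cmt Kf (f.coeff m) * (ratU : Kf) ^ m := by
  induction f using AddMonoidAlgebra.induction with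
  | zero => simp
  | single_add n a f hn ha ih =>
      have h2 : subst (AddMonoidAlgebra.single n a + f)
          = subst (AddMonoidAlgebra.single n a) + subst f := map_add _ _ _
      rw [h2, subst_single, addK, addA, ih, RingHom.map_add, add_mul, singleK, singleA]
      congr 1
      split
      · subst ‹n = m›; rfl
      · simp

end Stmt1

namespace Stmt1
set_option synthInstance.maxHeartbeats 800000
set_option maxHeartbeats 1600000

lemma prime_D : Prime Dp := by
  rw [← MulEquiv.prime_iff (MvPolynomial.finSuccEquiv ℂ 1).toMulEquiv]
  have h : (MvPolynomial.finSuccEquiv ℂ 1) Dp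
      = Polynomial.X - Polynomial.C (X 0) := by
    rw [Dp, map_sub, finSuccEquiv_X_zero, show (1 : Fin 2) = (0 : Fin 1).succ from rfl,
      finSuccEquiv_X_succ]
  rw [show (MvPolynomial.finSuccEquiv ℂ 1).toMulEquiv Dp = (MvPolynomial.finSuccEquiv ℂ 1) Dp
    from rfl, h]
  exact Polynomial.prime_X_sub_C _

lemma prime_S : Prime Sp := by
  rw [← MulEquiv.prime_iff (MvPolynomial.finSuccEquiv ℂ 1).toMulEquiv]
  have h : (MvPolynomial.finSuccEquiv ℂ 1) Sp
      = Polynomial.X - Polynomial.C (-X 0) := by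
    rw [Sp, map_add, finSuccEquiv_X_zero, show (1 : Fin 2) = (0 : Fin 1).succ from rfl,
      finSuccEquiv_X_succ, map_neg, sub_neg_eq_add]
  rw [show (MvPolynomial.finSuccEquiv ℂ 1).toMulEquiv Sp = (MvPolynomial.finSuccEquiv ℂ 1) Sp
    from rfl, h]
  exact Polynomial.prime_X_sub_C _

lemma D_not_dvd_S : ¬ Dp ∣ Sp := by
  rintro ⟨c, hc⟩
  have := congrArg (MvPolynomial.eval fun _ : Fin 2 => (1 : ℂ)) hc
  simp [Dp, Sp] at this

lemma S_not_dvd_D : ¬ Sp ∣ Dp := by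
  rintro ⟨c, hc⟩
  have := congrArg (MvPolynomial.eval fun i : Fin 2 => if i = 0 then (1:ℂ) else -1) hc
  simp [Dp, Sp] at this

end Stmt1

namespace Stmt1
set_option synthInstance.maxHeartbeats 800000
set_option maxHeartbeats 1600000

abbrev genSet : Set Aring := {muA, tauA, xA, yA}

lemma C_eq_single (a : Cmt) : LaurentPolynomial.C a = (AddMonoidAlgebra.single 0 a : Aring) := by
  rw [single_eq_C_mul_T, T_zero, mul_one]

lemma C_eq_singleK (a : Kf) : LaurentPolynomial.C a = (AddMonoidAlgebra.single 0 a : SK) := by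
  rw [single_eq_C_mul_T, T_zero, mul_one]

lemma C_mem (p : Cmt) : (LaurentPolynomial.C p : Aring) ∈ Algebra.adjoin ℂ genSet := by
  induction p using MvPolynomial.induction_on with
  | C a =>
      exact_mod_cast Subalgebra.algebraMap_mem (Algebra.adjoin ℂ genSet) a
  | add p q hp hq => rw [map_add]; exact add_mem hp hq
  | mul_X p i hp =>
      rw [map_mul]
      refine mul_mem hp ?_
      fin_cases i
      · exact Algebra.subset_adjoin (by simp [muA])
      · exact Algebra.subset_adjoin (by simp [tauA])

/-- the coefficient multiplier of the substitution -/
def eP (n : ℤ) : Cmt := (if 0 ≤ n then Dp else Sp) ^ n.natAbs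

lemma range_to_reg (f : Aring) (hf : subst f ∈ iota.range) (n : ℤ) :
    eP n ∣ f.coeff n := by
  obtain ⟨g, hg⟩ := hf
  have hg' : iota g = subst f := hg
  have h : algebraMap Cmt Kf (g.coeff n)
      = algebraMap Cmt Kf (f.coeff n) * (ratU : Kf) ^ n := by
    rw [← iota_apply, ← subst_apply, hg']
  set k := n.natAbs with hk
  by_cases hn : 0 ≤ n
  · have hnk : n = (k : ℤ) := (Int.natAbs_of_nonneg hn).symm
    have h2 : algebraMap Cmt Kf (g.coeff n * Dp ^ k)
        = algebraMap Cmt Kf (f.coeff n * Sp ^ k) := by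
      rw [RingHom.map_mul, RingHom.map_mul, RingHom.map_pow, RingHom.map_pow, h, hnk,
        zpow_natCast, mul_assoc, ← mul_pow, mul_comm (ratU : Kf) _, D_mul_ratU]
    have h3 := IsFractionRing.injective Cmt Kf h2
    have h4 : Dp ^ k ∣ f.coeff n * Sp ^ k := ⟨g.coeff n, by rw [← h3]; ring⟩
    have h5 : ¬ Dp ∣ Sp ^ k := fun hd => D_not_dvd_S (prime_D.dvd_of_dvd_pow hd)
    rw [eP, if_pos hn, ← hk]
    exact prime_D.pow_dvd_of_dvd_mul_right k h5 h4
  · have hnk : n = -(k : ℤ) := by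
      omega
    have hu : (ratU : Kf) ^ n * algebraMap Cmt Kf Sp ^ k = algebraMap Cmt Kf Dp ^ k := by
      rw [hnk, zpow_neg, zpow_natCast, ← inv_pow, ← mul_pow, mul_comm, ← D_eq]
    have h2 : algebraMap Cmt Kf (g.coeff n * Sp ^ k)
        = algebraMap Cmt Kf (f.coeff n * Dp ^ k) := by
      rw [RingHom.map_mul, RingHom.map_mul, RingHom.map_pow, RingHom.map_pow, h,
        mul_assoc, hu]
    have h3 := IsFractionRing.injective Cmt Kf h2
    have h4 : Sp ^ k ∣ f.coeff n * Dp ^ k := ⟨g.coeff n, by rw [← h3]; ring⟩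
    have h5 : ¬ Sp ∣ Dp ^ k := fun hd => S_not_dvd_D (prime_S.dvd_of_dvd_pow hd)
    rw [eP, if_neg hn, ← hk]
    exact prime_S.pow_dvd_of_dvd_mul_right k h5 h4

lemma single_mem (n : ℤ) (a : Cmt) (h : eP n ∣ a) :
    (AddMonoidAlgebra.single n a : Aring) ∈ Algebra.adjoin ℂ genSet := by
  obtain ⟨b, rfl⟩ := h
  set k := n.natAbs with hk
  by_cases hn : 0 ≤ n
  · have hnk : n = (k : ℤ) := (Int.natAbs_of_nonneg hn).symm
    have hx : (AddMonoidAlgebra.single n (eP n * b) : Aring) = LaurentPolynomial.C b * xA ^ k := by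
      rw [xA, mul_pow, ← map_pow, T_pow, single_eq_C_mul_T, eP, if_pos hn, map_mul, ← hk]
      rw [mul_one, ← hnk]
      simp only [Dp]
      ring
    rw [hx]
    have hxm : xA ∈ Algebra.adjoin ℂ genSet := Algebra.subset_adjoin (by simp)
    exact mul_mem (C_mem b) (pow_mem hxm k)
  · have hnk : n = -(k : ℤ) := by omega
    have hy : (AddMonoidAlgebra.single n (eP n * b) : Aring) = LaurentPolynomial.C b * yA ^ k := by
      rw [yA, mul_pow, ← map_pow, T_pow, single_eq_C_mul_T, eP, if_neg hn, map_mul, ← hk]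
      rw [mul_neg_one, ← hnk]
      simp only [Sp]
      ring
    rw [hy]
    have hym : yA ∈ Algebra.adjoin ℂ genSet := Algebra.subset_adjoin (by simp)
    exact mul_mem (C_mem b) (pow_mem hym k)

lemma reg_to_adjoin (f : Aring) (hf : ∀ n, eP n ∣ f.coeff n) :
    f ∈ Algebra.adjoin ℂ genSet := by
  have hf' : f = (f.coeff.sum fun n a => (AddMonoidAlgebra.single n a : Aring)) := by
    exact (AddMonoidAlgebra.sum_coeff_single f).symm
  rw [hf']
  refine Subalgebra.sum_mem _ fun n hn => ?_
  exact single_mem n _ (hf n)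

end Stmt1

namespace Stmt1
set_option synthInstance.maxHeartbeats 800000
set_option maxHeartbeats 1600000

lemma subst_muA : subst muA = iota muA := by
  rw [muA, C_eq_single, subst_single, iota_single, zpow_zero, mul_one]

lemma subst_tauA : subst tauA = iota tauA := by
  rw [tauA, C_eq_single, subst_single, iota_single, zpow_zero, mul_one]

lemma subst_xA : subst xA = iota (LaurentPolynomial.C Sp * T 1) := by
  have h1 : xA = (AddMonoidAlgebra.single 1 Dp : Aring) := by
    rw [single_eq_C_mul_T]; rfl
  have h2 : (LaurentPolynomial.C Sp * T 1 : Aring) = (AddMonoidAlgebra.single 1 Sp : Aring) :=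
    (single_eq_C_mul_T Sp 1).symm
  rw [h1, h2, subst_single, iota_single, zpow_one, D_mul_ratU]

lemma subst_yA : subst yA = iota (LaurentPolynomial.C Dp * T (-1)) := by
  have h1 : yA = (AddMonoidAlgebra.single (-1) Sp : Aring) := by
    rw [single_eq_C_mul_T]; rfl
  have h2 : (LaurentPolynomial.C Dp * T (-1) : Aring) = (AddMonoidAlgebra.single (-1) Dp : Aring) :=
    (single_eq_C_mul_T Dp (-1)).symm
  rw [h1, h2, subst_single, iota_single]
  congr 1
  rw [zpow_neg_one, ← D_eq]

lemma adjoin_to_range (f : Aring) (hf : f ∈ Algebra.adjoin ℂ genSet) :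
    subst f ∈ iota.range := by
  induction hf using Algebra.adjoin_induction with
  | mem a ha =>
      rcases ha with h | h | h | h
      · exact ⟨muA, by rw [h, subst_muA]; rfl⟩
      · exact ⟨tauA, by rw [h, subst_tauA]; rfl⟩
      · exact ⟨LaurentPolynomial.C Sp * T 1, by rw [h, subst_xA]; rfl⟩
      · exact ⟨LaurentPolynomial.C Dp * T (-1), by rw [h, subst_yA]; rfl⟩
  | algebraMap r =>
      refine ⟨algebraMap ℂ Aring r, ?_⟩
      show iota (algebraMap ℂ Aring r) = subst (algebraMap ℂ Aring r)
      rw [IsScalarTower.algebraMap_apply ℂ Cmt Aring, iota.commutes, subst.commutes]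
  | add a b ha hb hfa hfb =>
      rw [map_add]; exact add_mem hfa hfb
  | mul a b ha hb hfa hfb =>
      rw [map_mul]; exact mul_mem hfa hfb

lemma part1 (f : Aring) : subst f ∈ iota.range ↔ f ∈ Algebra.adjoin ℂ genSet :=
  ⟨fun h => reg_to_adjoin f (range_to_reg f h), adjoin_to_range f⟩

end Stmt1

namespace Stmt1
set_option synthInstance.maxHeartbeats 800000
set_option maxHeartbeats 1600000

def relQ : MvPolynomial (Fin 4) ℂ := X 2 * X 3 - (X 0 ^ 2 - X 1 ^ 2)

def gens : Fin 4 → Aring := ![muA, tauA, xA, yA]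

def phi : MvPolynomial (Fin 4) ℂ →ₐ[ℂ] Aring := aeval gens

def emb : Cmt →ₐ[ℂ] MvPolynomial (Fin 4) ℂ := rename (Fin.castLE (by norm_num))

lemma emb_X0 : emb (X 0) = X 0 := by simp [emb, rename_X]
lemma emb_X1 : emb (X 1) = X 1 := by simp [emb, rename_X]

lemma phi_emb (p : Cmt) : phi (emb p) = LaurentPolynomial.C p := by
  have h : phi.comp emb = IsScalarTower.toAlgHom ℂ Cmt Aring := by
    apply MvPolynomial.algHom_ext
    intro i
    fin_cases i
    · show phi (emb (X 0)) = algebraMap Cmt Aring (X 0)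
      rw [emb_X0]; show phi (X 0) = muA
      rw [phi, aeval_X]; rfl
    · show phi (emb (X 1)) = algebraMap Cmt Aring (X 1)
      rw [emb_X1]; show phi (X 1) = tauA
      rw [phi, aeval_X]; rfl
  calc phi (emb p) = (phi.comp emb) p := rfl
    _ = algebraMap Cmt Aring p := by rw [h]; rfl
  
def wQ (n : ℤ) : MvPolynomial (Fin 4) ℂ := (if 0 ≤ n then X 2 else X 3) ^ n.natAbs

lemma CT_mul_CT_A (a b : Cmt) (m n : ℤ) :
    (LaurentPolynomial.C a * T m) * (LaurentPolynomial.C b * T n)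
      = LaurentPolynomial.C (a * b) * T (m + n) := by
  rw [← single_eq_C_mul_T, ← single_eq_C_mul_T, ← single_eq_C_mul_T]
  exact AddMonoidAlgebra.single_mul_single _ _ _ _

lemma phi_wQ (n : ℤ) : phi (wQ n) = LaurentPolynomial.C (eP n) * T n := by
  by_cases hn : 0 ≤ n
  · have hnk : n = (n.natAbs : ℤ) := by omega
    rw [wQ, if_pos hn, eP, if_pos hn, map_pow, phi, aeval_X]
    show (gens 2) ^ n.natAbs = _
    rw [show gens 2 = xA from rfl, xA, mul_pow, ← map_pow, T_pow, mul_one, ← hnk]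
    rfl
  · have hnk : n = -(n.natAbs : ℤ) := by omega
    rw [wQ, if_neg hn, eP, if_neg hn, map_pow, phi, aeval_X]
    show (gens 3) ^ n.natAbs = _
    rw [show gens 3 = yA from rfl, yA, mul_pow, ← map_pow, T_pow, mul_neg_one, ← hnk]
    rfl

/-- normal forms -/
def PhiF (g : ℤ →₀ Cmt) : MvPolynomial (Fin 4) ℂ := g.sum fun n a => emb a * wQ n

lemma PhiF_zero : PhiF 0 = 0 := Finsupp.sum_zero_index

lemma PhiF_single (n : ℤ) (a : Cmt) : PhiF (Finsupp.single n a) = emb a * wQ n := by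
  rw [PhiF, Finsupp.sum_single_index]
  rw [map_zero, zero_mul]

lemma PhiF_add (g h : ℤ →₀ Cmt) : PhiF (g + h) = PhiF g + PhiF h := by
  apply Finsupp.sum_add_index'
  · intro n; rw [map_zero, zero_mul]
  · intro n a b; rw [map_add, add_mul]

end Stmt1

namespace Stmt1
set_option synthInstance.maxHeartbeats 800000
set_option maxHeartbeats 1600000

lemma emb_rel : emb ((X 0) ^ 2 - (X 1) ^ 2 : Cmt)
    = ((X 0) ^ 2 - (X 1) ^ 2 : MvPolynomial (Fin 4) ℂ) := by
  rw [map_sub, map_pow, map_pow, emb_X0, emb_X1]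

lemma step0 (n : ℤ) (a : Cmt) :
    ∃ g' : ℤ →₀ Cmt, relQ ∣ emb a * wQ n * X 0 - PhiF g' := by
  refine ⟨Finsupp.single n (X 0 * a), ?_⟩
  rw [PhiF_single, map_mul, emb_X0]
  exact ⟨0, by ring⟩

lemma step1 (n : ℤ) (a : Cmt) :
    ∃ g' : ℤ →₀ Cmt, relQ ∣ emb a * wQ n * X 1 - PhiF g' := by
  refine ⟨Finsupp.single n (X 1 * a), ?_⟩
  rw [PhiF_single, map_mul, emb_X1]
  exact ⟨0, by ring⟩

lemma step2 (n : ℤ) (a : Cmt) :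
    ∃ g' : ℤ →₀ Cmt, relQ ∣ emb a * wQ n * X 2 - PhiF g' := by
  by_cases hn : 0 ≤ n
  · refine ⟨Finsupp.single (n + 1) a, ?_⟩
    rw [PhiF_single, wQ, wQ, if_pos hn, if_pos (by omega : (0:ℤ) ≤ n + 1),
      show (n+1).natAbs = n.natAbs + 1 by omega]
    exact ⟨0, by ring⟩
  · refine ⟨Finsupp.single (n + 1) (((X 0) ^ 2 - (X 1) ^ 2) * a), ?_⟩
    set j := n.natAbs - 1 with hj
    have hw : wQ (n + 1) = X 3 ^ j := by
      rw [wQ, show (n+1).natAbs = j by omega]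
      by_cases h1 : 0 ≤ n + 1
      · rw [if_pos h1, show j = 0 by omega, pow_zero, pow_zero]
      · rw [if_neg h1]
    have hwn : wQ n = X 3 ^ j * X 3 := by
      rw [wQ, if_neg hn, show n.natAbs = j + 1 by omega, pow_succ]
    rw [PhiF_single, hw, hwn, map_mul, emb_rel]
    refine ⟨emb a * X 3 ^ j, ?_⟩
    rw [relQ]; ring

lemma step3 (n : ℤ) (a : Cmt) :
    ∃ g' : ℤ →₀ Cmt, relQ ∣ emb a * wQ n * X 3 - PhiF g' := by
  by_cases hn : 0 < n
  · refine ⟨Finsupp.single (n - 1) (((X 0) ^ 2 - (X 1) ^ 2) * a), ?_⟩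
    set j := n.natAbs - 1 with hj
    have hw : wQ (n - 1) = X 2 ^ j := by
      rw [wQ, show (n-1).natAbs = j by simp only [hj]; omega, if_pos (by omega : (0:ℤ) ≤ n - 1)]
    have hwn : wQ n = X 2 ^ j * X 2 := by
      rw [wQ, if_pos (by omega : (0:ℤ) ≤ n), show n.natAbs = j + 1 by omega, pow_succ]
    rw [PhiF_single, hw, hwn, map_mul, emb_rel]
    refine ⟨emb a * X 2 ^ j, ?_⟩
    rw [relQ]; ring
  · refine ⟨Finsupp.single (n - 1) a, ?_⟩
    have h1 : wQ (n - 1) = X 3 ^ (n.natAbs + 1) := by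
      rw [wQ, if_neg (by omega : ¬ (0:ℤ) ≤ n - 1), show (n-1).natAbs = n.natAbs + 1 by omega]
    have h2 : wQ n = X 3 ^ n.natAbs := by
      rw [wQ]
      by_cases h3 : 0 ≤ n
      · rw [if_pos h3, show n.natAbs = 0 by omega, pow_zero, pow_zero]
      · rw [if_neg h3]
    rw [PhiF_single, h1, h2, pow_succ]
    exact ⟨0, by ring⟩

lemma step_single (n : ℤ) (a : Cmt) (i : Fin 4) :
    ∃ g' : ℤ →₀ Cmt, relQ ∣ emb a * wQ n * X i - PhiF g' := by
  fin_cases i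
  · exact step0 n a
  · exact step1 n a
  · exact step2 n a
  · exact step3 n a

lemma step (g : ℤ →₀ Cmt) (i : Fin 4) :
    ∃ g' : ℤ →₀ Cmt, relQ ∣ PhiF g * X i - PhiF g' := by
  induction g using Finsupp.induction with
  | zero => exact ⟨0, by rw [PhiF_zero]; exact ⟨0, by ring⟩⟩
  | single_add n a g hn ha ih =>
      obtain ⟨g2, h2⟩ := ih
      obtain ⟨g1, h1⟩ := step_single n a i
      refine ⟨g1 + g2, ?_⟩
      rw [PhiF_add, PhiF_add, PhiF_single]
      have heq : (emb a * wQ n + PhiF g) * X i - (PhiF g1 + PhiF g2)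
          = (emb a * wQ n * X i - PhiF g1) + (PhiF g * X i - PhiF g2) := by ring
      rw [heq]
      exact dvd_add h1 h2

lemma reduction (p : MvPolynomial (Fin 4) ℂ) :
    ∃ g : ℤ →₀ Cmt, relQ ∣ p - PhiF g := by
  induction p using MvPolynomial.induction_on with
  | C a =>
      refine ⟨Finsupp.single 0 (MvPolynomial.C a), ?_⟩
      have h1 : emb (MvPolynomial.C a) = (MvPolynomial.C a : MvPolynomial (Fin 4) ℂ) := by
        simp [emb]
      rw [PhiF_single, h1, wQ]
      simp
  | add p q hp hq =>
      obtain ⟨gp, hgp⟩ := hp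
      obtain ⟨gq, hgq⟩ := hq
      refine ⟨gp + gq, ?_⟩
      rw [PhiF_add]
      have heq : p + q - (PhiF gp + PhiF gq) = (p - PhiF gp) + (q - PhiF gq) := by ring
      rw [heq]
      exact dvd_add hgp hgq
  | mul_X p i hp =>
      obtain ⟨g, hg⟩ := hp
      obtain ⟨g', hg'⟩ := step g i
      refine ⟨g', ?_⟩
      have heq : p * X i - PhiF g' = (p - PhiF g) * X i + (PhiF g * X i - PhiF g') := by ring
      rw [heq]
      exact dvd_add (Dvd.dvd.mul_right hg _) hg'

end Stmt1

namespace Stmt1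
set_option synthInstance.maxHeartbeats 800000
set_option maxHeartbeats 1600000

lemma phi_relQ : phi relQ = 0 := by
  have h2 : phi (X 2) = xA := by rw [phi, aeval_X]; rfl
  have h3 : phi (X 3) = yA := by rw [phi, aeval_X]; rfl
  have h0 : phi (X 0) = muA := by rw [phi, aeval_X]; rfl
  have h1 : phi (X 1) = tauA := by rw [phi, aeval_X]; rfl
  rw [relQ, map_sub, map_mul, map_sub, map_pow, map_pow, h0, h1, h2, h3]
  have hxy : xA * yA = LaurentPolynomial.C (Dp * Sp) := by
    rw [xA, yA, CT_mul_CT_A, show (1 + -1 : ℤ) = 0 by norm_num, T_zero, mul_one, Dp, Sp]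
  have hmt : muA ^ 2 - tauA ^ 2 = LaurentPolynomial.C (Dp * Sp) := by
    rw [muA, tauA, ← map_pow, ← map_pow, ← map_sub]
    congr 1
    rw [Dp, Sp]; ring
  rw [hxy, hmt, sub_self]

lemma phi_PhiF_single (n : ℤ) (a : Cmt) :
    phi (PhiF (Finsupp.single n a)) = (AddMonoidAlgebra.single n (a * eP n) : Aring) := by
  rw [PhiF_single, map_mul, phi_emb, phi_wQ, ← mul_assoc, ← map_mul, ← single_eq_C_mul_T]

lemma phi_PhiF_apply (g : ℤ →₀ Cmt) (m : ℤ) :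
    (phi (PhiF g)).coeff m = g m * eP m := by
  induction g using Finsupp.induction with
  | zero =>
      rw [PhiF_zero, map_zero]
      show (0 : Cmt) = _
      rw [Finsupp.zero_apply, zero_mul]
  | single_add n a g hn ha ih =>
      have h2 : phi (PhiF (Finsupp.single n a + g))
          = phi (PhiF (Finsupp.single n a)) + phi (PhiF g) := by
        rw [PhiF_add, map_add]
      rw [h2, phi_PhiF_single, addA, Finsupp.add_apply, ih, singleA, Finsupp.single_apply, add_mul]
      congr 1
      split
      · subst ‹n = m›; rfl
      · rw [zero_mul]

lemma eP_ne (m : ℤ) : eP m ≠ 0 := by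
  rw [eP]
  apply pow_ne_zero
  split
  · exact diff_ne
  · exact sum_ne

lemma ker_le (p : MvPolynomial (Fin 4) ℂ) (hp : phi p = 0) : relQ ∣ p := by
  obtain ⟨g, hg⟩ := reduction p
  obtain ⟨c, hc⟩ := hg
  have hphic : phi (p - PhiF g) = 0 := by
    rw [hc, map_mul, phi_relQ, zero_mul]
  have hPhiF : phi (PhiF g) = 0 := by
    have := map_sub phi p (PhiF g)
    rw [hphic, hp, zero_sub] at this
    exact neg_eq_zero.mp this.symm
  have hgz : g = 0 := by
    apply Finsupp.ext
    intro m
    have h := phi_PhiF_apply g m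
    rw [hPhiF] at h
    have h0 : (0 : Cmt) = g m * eP m := h
    have := mul_eq_zero.mp h0.symm
    rcases this with h | h
    · exact h
    · exact absurd h (eP_ne m)
  rw [hgz, PhiF_zero, sub_zero] at hc
  exact ⟨c, hc⟩

abbrev IQ : Ideal (MvPolynomial (Fin 4) ℂ) :=
  Ideal.span ({X 2 * X 3 - (X 0 ^ 2 - X 1 ^ 2)} : Set (MvPolynomial (Fin 4) ℂ))

lemma hker : ∀ q ∈ IQ, phi q = 0 := by
  intro q hq
  obtain ⟨c, hc⟩ := Ideal.mem_span_singleton.mp hq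
  rw [hc, map_mul, show phi (X 2 * X 3 - (X 0 ^ 2 - X 1 ^ 2)) = 0 from phi_relQ, zero_mul]

def psi : Quadric →ₐ[ℂ] Aring := Ideal.Quotient.liftₐ IQ phi hker

lemma psi_mk (p : MvPolynomial (Fin 4) ℂ) : psi (Ideal.Quotient.mk IQ p) = phi p := by
  rfl

lemma psi_inj : Function.Injective psi := by
  rw [injective_iff_map_eq_zero]
  intro x hx
  obtain ⟨p, rfl⟩ := Ideal.Quotient.mk_surjective (I := IQ) x
  rw [psi_mk] at hx
  rw [show (Ideal.Quotient.mk IQ) p = 0 ↔ p ∈ IQ from Ideal.Quotient.eq_zero_iff_mem]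
  exact Ideal.mem_span_singleton.mpr (ker_le p hx)

lemma range_gens : Set.range gens = genSet := by
  ext x
  constructor
  · rintro ⟨i, rfl⟩
    fin_cases i
    · exact Or.inl rfl
    · exact Or.inr (Or.inl rfl)
    · exact Or.inr (Or.inr (Or.inl rfl))
    · exact Or.inr (Or.inr (Or.inr rfl))
  · rintro (h | h | h | h) <;> subst h
    · exact ⟨0, rfl⟩
    · exact ⟨1, rfl⟩
    · exact ⟨2, rfl⟩
    · exact ⟨3, rfl⟩

lemma psi_range : psi.range = Algebra.adjoin ℂ genSet := by
  have h1 : psi.range = phi.range := by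
    apply SetLike.ext
    intro x
    constructor
    · rintro ⟨q, rfl⟩
      obtain ⟨p, rfl⟩ := Ideal.Quotient.mk_surjective (I := IQ) q
      exact ⟨p, (psi_mk p).symm⟩
    · rintro ⟨p, rfl⟩
      exact ⟨Ideal.Quotient.mk IQ p, psi_mk p⟩
  rw [h1, phi, ← Algebra.adjoin_range_eq_range_aeval, range_gens]

def eIso : Quadric ≃ₐ[ℂ] Algebra.adjoin ℂ genSet :=
  (AlgEquiv.ofInjective psi psi_inj).trans (Subalgebra.equivOfEq _ _ psi_range)

lemma eIso_mk (p : MvPolynomial (Fin 4) ℂ) :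
    (eIso (Ideal.Quotient.mk IQ p) : Aring) = phi p := by
  have h1 : ∀ x : psi.range, ((Subalgebra.equivOfEq _ _ psi_range) x : Aring) = (x : Aring) :=
    fun x => rfl
  calc (eIso (Ideal.Quotient.mk IQ p) : Aring)
      = (((AlgEquiv.ofInjective psi psi_inj) (Ideal.Quotient.mk IQ p) : psi.range) : Aring) :=
        h1 _
    _ = psi (Ideal.Quotient.mk IQ p) := by rw [AlgEquiv.ofInjective_apply]
    _ = phi p := psi_mk p

end Stmt1

/-- The subset of `f ∈ ℂ[μ,τ][z,z⁻¹]` regular after `z ↦ (μ+τ)(μ−τ)⁻¹z`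
is the `ℂ`-subalgebra generated by `μ, τ, x = (μ−τ)z, y = (μ+τ)z⁻¹`, which is isomorphic to
the coordinate ring of the quadric cone `xy = μ² − τ²`. -/
theorem statement1 :
    (∀ f : Aring, subst f ∈ iota.range ↔
      f ∈ Algebra.adjoin ℂ ({muA, tauA, xA, yA} : Set Aring)) ∧
    ∃ e : Quadric ≃ₐ[ℂ] Algebra.adjoin ℂ ({muA, tauA, xA, yA} : Set Aring),
      e (Ideal.Quotient.mk _ (X 0)) = ⟨muA, Algebra.subset_adjoin (by simp)⟩ ∧
      e (Ideal.Quotient.mk _ (X 1)) = ⟨tauA, Algebra.subset_adjoin (by simp)⟩ ∧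
      e (Ideal.Quotient.mk _ (X 2)) = ⟨xA, Algebra.subset_adjoin (by simp)⟩ ∧
      e (Ideal.Quotient.mk _ (X 3)) = ⟨yA, Algebra.subset_adjoin (by simp)⟩ := by
  constructor
  · exact Stmt1.part1
  · refine ⟨Stmt1.eIso, ?_, ?_, ?_, ?_⟩
    · apply Subtype.ext
      rw [Stmt1.eIso_mk]
      rw [Stmt1.phi, aeval_X]; rfl
    · apply Subtype.ext
      rw [Stmt1.eIso_mk]
      rw [Stmt1.phi, aeval_X]; rfl
    · apply Subtype.ext
      rw [Stmt1.eIso_mk]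
      rw [Stmt1.phi, aeval_X]; rfl
    · apply Subtype.ext
      rw [Stmt1.eIso_mk]
      rw [Stmt1.phi, aeval_X]; rfl
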